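/- For every real t, h((1 − cos t)/2) + h((1 − sin t)/2) ≥ 1, where h is the binary entropy function h(q) := −q log₂ q − (1−q) log₂(1−q) (with h(0) = h(1) = 0); equality holds at t = 0. -/

import Mathlib

noncomputable section

/-- The base-2 binary entropy function `h(q) = −q log₂ q − (1−q) log₂ (1−q)`
(with the convention `0 · log₂ 0 = 0`, automatic in Lean). -/
def binEnt (q : ℝ) : ℝ := -q * Real.logb 2 q - (1 - q) * Real.logb 2 (1 - q)

open Real Set

private def phiF : ℝ → ℝ := fun u => 2 * Real.log 2 * u^2 - (1+u) * Real.log (1+u) - (1-u) * Real.log (1-u)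
private def psiF : ℝ → ℝ := fun u => 4 * Real.log 2 * u - Real.log (1+u) + Real.log (1-u)

private lemma hasDerivAt_phiF {x : ℝ} (h1 : -1 < x) (h2 : x < 1) :
    HasDerivAt phiF (psiF x) x := by
  have hx1 : (1:ℝ) + x ≠ 0 := by linarith
  have hx2 : (1:ℝ) - x ≠ 0 := by linarith
  have d1 : HasDerivAt (fun u : ℝ => 2 * Real.log 2 * u^2) (2 * Real.log 2 * (2*x)) x := by
    simpa using ((hasDerivAt_pow 2 x).const_mul (2 * Real.log 2))
  have dlog1 : HasDerivAt (fun u : ℝ => Real.log (1+u)) (1/(1+x)) x := by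
    have := (Real.hasDerivAt_log hx1).comp x ((hasDerivAt_id x).const_add 1)
    simpa [one_div, Function.comp_def] using this
  have dlog2 : HasDerivAt (fun u : ℝ => Real.log (1-u)) (-(1/(1-x))) x := by
    have := (Real.hasDerivAt_log hx2).comp x ((hasDerivAt_id x).neg.const_add 1)
    simpa [one_div, Function.comp_def] using this
  have d2 : HasDerivAt (fun u : ℝ => (1+u) * Real.log (1+u))
      (1 * Real.log (1+x) + (1+x) * (1/(1+x))) x :=
    ((hasDerivAt_id x).const_add 1).mul dlog1
  have d3 : HasDerivAt (fun u : ℝ => (1-u) * Real.log (1-u))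
      ((-1) * Real.log (1-x) + (1-x) * (-(1/(1-x)))) x := by
    have : HasDerivAt (fun u : ℝ => 1 - u) (-1) x := by
      exact (hasDerivAt_id x).const_sub 1
    exact this.mul dlog2
  have := (d1.sub d2).sub d3
  refine this.congr_deriv ?_
  unfold psiF
  field_simp
  ring

private lemma hasDerivAt_psiF {x : ℝ} (h1 : -1 < x) (h2 : x < 1) :
    HasDerivAt psiF (4 * Real.log 2 - 1/(1+x) - 1/(1-x)) x := by
  have hx1 : (1:ℝ) + x ≠ 0 := by linarith
  have hx2 : (1:ℝ) - x ≠ 0 := by linarith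
  have d1 : HasDerivAt (fun u : ℝ => 4 * Real.log 2 * u) (4 * Real.log 2) x := by
    simpa using (hasDerivAt_id x).const_mul (4 * Real.log 2)
  have dlog1 : HasDerivAt (fun u : ℝ => Real.log (1+u)) (1/(1+x)) x := by
    have := (Real.hasDerivAt_log hx1).comp x ((hasDerivAt_id x).const_add 1)
    simpa [one_div, Function.comp_def] using this
  have dlog2 : HasDerivAt (fun u : ℝ => Real.log (1-u)) (-(1/(1-x))) x := by
    have := (Real.hasDerivAt_log hx2).comp x ((hasDerivAt_id x).neg.const_add 1)
    simpa [one_div, Function.comp_def] using this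
  have := (d1.sub dlog1).add dlog2
  exact this.congr_deriv (by ring)

private lemma artanh_bound {u : ℝ} (h0 : 0 ≤ u) (h1 : u < 1) :
    Real.log (1+u) - Real.log (1-u) ≤ 2*u/(1-u^2) := by
  rcases eq_or_lt_of_le h0 with rfl | h0'
  · simp
  · have hu1 : (0:ℝ) < 1 - u := by linarith
    have hu2 : (0:ℝ) < 1 + u := by linarith
    set y := (1+u)/(1-u) with hy
    have hy0 : 0 < y := by positivity
    have hy1 : 1 < y := by rw [hy, lt_div_iff₀ hu1]; linarith
    have hlog : Real.log (1+u) - Real.log (1-u) = Real.log y := by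
      rw [hy, Real.log_div (by linarith) (by linarith)]
    have hpos : 0 < Real.log y := Real.log_pos hy1
    have hsinh : Real.log y < Real.sinh (Real.log y) := Real.self_lt_sinh_iff.2 hpos
    have hsv : Real.sinh (Real.log y) = (y - 1/y)/2 := by
      rw [Real.sinh_eq, Real.exp_log hy0, Real.exp_neg, Real.exp_log hy0]
      ring
    have hyv : (y - 1/y)/2 = 2*u/(1-u^2) := by
      rw [hy, show (1:ℝ)-u^2 = (1-u)*(1+u) from by ring]
      field_simp
      ring
    rw [hlog]
    calc Real.log y ≤ (y - 1/y)/2 := by rw [← hsv]; exact hsinh.le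
    _ = 2*u/(1-u^2) := hyv

private lemma log2_gt_half : (1:ℝ)/2 < Real.log 2 := by
  have := Real.log_two_gt_d9; linarith

private lemma log2_lt_one : Real.log 2 < 1 := by
  have := Real.log_two_lt_d9; linarith

private def u0 : ℝ := Real.sqrt (1 - 1/(2*Real.log 2))

private lemma u0_sq : u0^2 = 1 - 1/(2*Real.log 2) := by
  have hc := log2_gt_half
  have : (0:ℝ) ≤ 1 - 1/(2*Real.log 2) := by
    rw [sub_nonneg, div_le_one (by linarith)]; linarith
  rw [u0, sq_sqrt this]

private lemma u0_pos : 0 < u0 := by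
  have hc := log2_gt_half
  apply Real.sqrt_pos.2
  rw [sub_pos, div_lt_one (by linarith)]; linarith

private lemma u0_lt_one : u0 < 1 := by
  have hc := log2_gt_half
  have h1 := log2_lt_one
  have h : 1 - 1/(2*Real.log 2) < 1 := by
    have : 0 < 1/(2*Real.log 2) := by positivity
    linarith
  rw [u0]
  calc Real.sqrt (1 - 1/(2*Real.log 2)) < Real.sqrt 1 := by
        apply Real.sqrt_lt_sqrt _ h
        rw [sub_nonneg, div_le_one (by linarith)]; linarith
    _ = 1 := Real.sqrt_one

private lemma continuous_phiF : Continuous phiF := by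
  have h1 : Continuous fun u : ℝ => (1+u) * Real.log (1+u) :=
    Real.continuous_mul_log.comp (continuous_const.add continuous_id)
  have h2 : Continuous fun u : ℝ => (1-u) * Real.log (1-u) :=
    Real.continuous_mul_log.comp (continuous_const.sub continuous_id)
  exact ((continuous_const.mul (continuous_pow 2)).sub h1).sub h2

private lemma phiF_zero : phiF 0 = 0 := by simp [phiF]

private lemma phiF_one : phiF 1 = 0 := by norm_num [phiF]

private lemma phiF_nonneg_left : ∀ u ∈ Icc (0:ℝ) u0, 0 ≤ phiF u := by
  have hc := log2_gt_half
  have hmono : MonotoneOn phiF (Icc (0:ℝ) u0) := by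
    apply monotoneOn_of_deriv_nonneg (convex_Icc _ _) continuous_phiF.continuousOn
    · intro x hx
      rw [interior_Icc] at hx
      exact (hasDerivAt_phiF (by linarith [hx.1]) (hx.2.trans u0_lt_one)).differentiableAt.differentiableWithinAt
    · intro x hx
      rw [interior_Icc] at hx
      have hx0 : 0 < x := hx.1
      have hx1 : x < 1 := hx.2.trans u0_lt_one
      rw [(hasDerivAt_phiF (by linarith) hx1).deriv]
      have hab := artanh_bound hx0.le hx1
      have hxsq : x^2 ≤ u0^2 := by nlinarith [hx.2, u0_pos]
      have hkey : 1 ≤ 2 * Real.log 2 * (1 - x^2) := by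
        rw [u0_sq] at hxsq
        have h2c : (0:ℝ) < 2 * Real.log 2 := by linarith
        have : 1/(2*Real.log 2) ≤ 1 - x^2 := by linarith
        calc (1:ℝ) = 2*Real.log 2 * (1/(2*Real.log 2)) := by field_simp
          _ ≤ 2*Real.log 2 * (1-x^2) := by apply mul_le_mul_of_nonneg_left this h2c.le
      have hx2pos : 0 < 1 - x^2 := by nlinarith
      have h2 : 2*x/(1-x^2) ≤ 4 * Real.log 2 * x := by
        rw [div_le_iff₀ hx2pos]
        nlinarith [mul_le_mul_of_nonneg_left hkey (by linarith : (0:ℝ) ≤ 2*x)]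
      show 0 ≤ psiF x
      unfold psiF
      linarith
  intro u hu
  have := hmono (left_mem_Icc.2 (by linarith [u0_pos])) hu hu.1
  rwa [phiF_zero] at this

private lemma phiF_nonneg_right : ∀ u ∈ Icc u0 (1:ℝ), 0 ≤ phiF u := by
  have hc := log2_gt_half
  have hconc : ConcaveOn ℝ (Icc u0 (1:ℝ)) phiF := by
    apply concaveOn_of_hasDerivWithinAt2_nonpos (convex_Icc _ _) continuous_phiF.continuousOn
      (f' := psiF) (f'' := fun x => 4 * Real.log 2 - 1/(1+x) - 1/(1-x))
    · intro x hx
      rw [interior_Icc] at hx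
      have hx0 : 0 < x := u0_pos.trans hx.1
      exact (hasDerivAt_phiF (by linarith) hx.2).hasDerivWithinAt
    · intro x hx
      rw [interior_Icc] at hx
      have hx0 : 0 < x := u0_pos.trans hx.1
      exact (hasDerivAt_psiF (by linarith) hx.2).hasDerivWithinAt
    · intro x hx
      rw [interior_Icc] at hx
      have hx0 : 0 < x := u0_pos.trans hx.1
      have hx1 : x < 1 := hx.2
      have h1 : (0:ℝ) < 1 + x := by linarith
      have h2 : (0:ℝ) < 1 - x := by linarith
      have hxsq : u0^2 ≤ x^2 := by nlinarith [hx.1, u0_pos]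
      have hkey : 2 * Real.log 2 * (1 - x^2) ≤ 1 := by
        rw [u0_sq] at hxsq
        have h2c : (0:ℝ) < 2 * Real.log 2 := by linarith
        have : 1 - x^2 ≤ 1/(2*Real.log 2) := by linarith
        calc 2*Real.log 2 * (1-x^2) ≤ 2*Real.log 2 * (1/(2*Real.log 2)) :=
              mul_le_mul_of_nonneg_left this h2c.le
          _ = 1 := by field_simp
      have : 4 * Real.log 2 ≤ 1/(1+x) + 1/(1-x) := by
        rw [div_add_div _ _ (ne_of_gt h1) (ne_of_gt h2), le_div_iff₀ (by positivity)]
        nlinarith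
      linarith
  intro u hu
  rcases eq_or_lt_of_le hu.1 with rfl | hlt
  · exact phiF_nonneg_left u0 (right_mem_Icc.2 u0_pos.le)
  · have hd : 0 < 1 - u0 := by linarith [u0_lt_one]
    set a := (1-u)/(1-u0) with ha
    set b := (u-u0)/(1-u0) with hb
    have ha0 : 0 ≤ a := by apply div_nonneg _ hd.le; linarith [hu.2]
    have hb0 : 0 ≤ b := by apply div_nonneg _ hd.le; linarith
    have hab : a + b = 1 := by
      rw [ha, hb, ← add_div, div_eq_one_iff_eq (ne_of_gt hd)]
      ring
    have hcomb : a • u0 + b • (1:ℝ) = u := by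
      simp only [smul_eq_mul, ha, hb]
      field_simp
      ring
    have := hconc.2 (left_mem_Icc.2 (by linarith [u0_lt_one])) (right_mem_Icc.2 (by linarith [u0_lt_one])) ha0 hb0 hab
    rw [hcomb, phiF_one] at this
    have h0 : 0 ≤ phiF u0 := phiF_nonneg_left u0 (right_mem_Icc.2 u0_pos.le)
    have : a * phiF u0 + b * 0 ≤ phiF u := by simpa using this
    nlinarith

private lemma phiF_nonneg {u : ℝ} (h0 : 0 ≤ u) (h1 : u ≤ 1) : 0 ≤ phiF u := by
  rcases le_total u u0 with h | h
  · exact phiF_nonneg_left u ⟨h0, h⟩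
  · exact phiF_nonneg_right u ⟨h, h1⟩


private lemma binEnt_key : ∀ u : ℝ, 0 ≤ u → u ≤ 1 → 1 - u^2 ≤ binEnt ((1-u)/2) := by
  intro u h0 h1
  rcases eq_or_lt_of_le h1 with rfl | h1'
  · norm_num [binEnt]
  · have hc := log2_gt_half
    have hu1 : (0:ℝ) < 1 - u := by linarith
    have hu2 : (0:ℝ) < 1 + u := by linarith
    have hEq : binEnt ((1-u)/2)
        = (2*Real.log 2 - ((1+u)*Real.log (1+u) + (1-u)*Real.log (1-u)))/(2*Real.log 2) := by
      unfold binEnt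
      rw [show (1:ℝ) - (1-u)/2 = (1+u)/2 from by ring, Real.logb, Real.logb,
        Real.log_div (ne_of_gt hu1) two_ne_zero, Real.log_div (ne_of_gt hu2) two_ne_zero]
      field_simp
      ring
    rw [hEq, le_div_iff₀ (by linarith)]
    have := phiF_nonneg h0 h1
    unfold phiF at this
    nlinarith

private lemma binEnt_bound : ∀ x : ℝ, -1 ≤ x → x ≤ 1 → 1 - x^2 ≤ binEnt ((1-x)/2) := by
  intro x hm hp
  rcases le_or_gt 0 x with h | h
  · exact binEnt_key x h hp
  · have key := binEnt_key (-x) (by linarith) (by linarith)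
    have hsym : binEnt ((1-x)/2) = binEnt ((1-(-x))/2) := by
      unfold binEnt
      rw [show (1:ℝ) - (1 - -x)/2 = (1-x)/2 from by ring,
        show (1:ℝ) - (1-x)/2 = (1 - -x)/2 from by ring]
      ring
    rw [hsym]
    calc 1 - x^2 = 1 - (-x)^2 := by ring
      _ ≤ _ := key


/-- `h((1 − cos t)/2) + h((1 − sin t)/2) ≥ 1` for every real `t`,
with equality at `t = 0`. -/
theorem binEnt_cos_sin_ge_one :
    (∀ t : ℝ, 1 ≤ binEnt ((1 - Real.cos t) / 2) + binEnt ((1 - Real.sin t) / 2)) ∧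
    binEnt ((1 - Real.cos 0) / 2) + binEnt ((1 - Real.sin 0) / 2) = 1 := by
  constructor
  · intro t
    have h1 := binEnt_bound (Real.cos t) (Real.neg_one_le_cos t) (Real.cos_le_one t)
    have h2 := binEnt_bound (Real.sin t) (Real.neg_one_le_sin t) (Real.sin_le_one t)
    have h3 := Real.sin_sq_add_cos_sq t
    nlinarith
  · rw [Real.cos_zero, Real.sin_zero]
    have hc := log2_gt_half
    norm_num [binEnt, Real.logb]
    rw [show (1:ℝ)/2 = 2⁻¹ from by norm_num, Real.log_inv]
    field_simp
    norm_num

end
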